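/- arXiv:2503.15568 — 2 statements merged into one kernel-verified Lean document; each statement's English description precedes it below -/
import Mathlib

section
/- The function g(x) = x(1 − tanh(x)²)/tanh(x), extended by g(0) = 1, is even, takes values in (0, 1], and is monotonically decreasing on [0, ∞). -/
open Real Set

private lemma hasDerivAt_F (x : ℝ) :
    HasDerivAt (fun x : ℝ => x * Real.cosh x - Real.sinh x) (x * Real.sinh x) x := by
  have h1 : HasDerivAt (fun x : ℝ => x * Real.cosh x)
      (1 * Real.cosh x + x * Real.sinh x) x :=
    (hasDerivAt_id x).mul (Real.hasDerivAt_cosh x)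
  have := h1.sub (Real.hasDerivAt_sinh x)
  exact this.congr_deriv (by ring)

private lemma sinh_le_mul_cosh {x : ℝ} (hx : 0 ≤ x) : Real.sinh x ≤ x * Real.cosh x := by
  have hmono : MonotoneOn (fun x : ℝ => x * Real.cosh x - Real.sinh x) (Ici 0) := by
    apply monotoneOn_of_deriv_nonneg (convex_Ici 0)
    · exact (Continuous.continuousOn (by continuity))
    · intro y hy
      exact ((hasDerivAt_F y).differentiableAt).differentiableWithinAt
    · intro y hy
      rw [interior_Ici] at hy
      rw [(hasDerivAt_F y).deriv]
      exact mul_nonneg hy.le (Real.sinh_nonneg_iff.2 hy.le)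
  have := hmono (self_mem_Ici) hx hx
  simpa using this

private lemma key_sinh {a b : ℝ} (ha : 0 < a) (hab : a ≤ b) :
    b * Real.sinh a ≤ a * Real.sinh b := by
  have hd : ∀ x : ℝ, HasDerivAt (fun x => a * Real.sinh x - x * Real.sinh a)
      (a * Real.cosh x - Real.sinh a) x := by
    intro x
    have h1 := (Real.hasDerivAt_sinh x).const_mul a
    have h2 : HasDerivAt (fun x : ℝ => x * Real.sinh a) (Real.sinh a) x := by
      simpa using (hasDerivAt_id x).mul_const (Real.sinh a)
    exact h1.sub h2
  have hmono : MonotoneOn (fun x => a * Real.sinh x - x * Real.sinh a) (Ici a) := by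
    apply monotoneOn_of_deriv_nonneg (convex_Ici a)
    · exact (Continuous.continuousOn (by continuity))
    · intro y _; exact ((hd y).differentiableAt).differentiableWithinAt
    · intro y hy
      rw [interior_Ici] at hy
      rw [(hd y).deriv]
      have hca : Real.cosh a ≤ Real.cosh y := by
        rw [Real.cosh_le_cosh]
        rw [abs_of_pos ha, abs_of_pos (ha.trans hy)]
        exact hy.le
      have : Real.sinh a ≤ a * Real.cosh a := sinh_le_mul_cosh ha.le
      nlinarith
  have := hmono (self_mem_Ici) hab hab
  simp only at this
  nlinarith

private lemma g_eq {x : ℝ} (hx : x ≠ 0) :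
    x * (1 - Real.tanh x ^ 2) / Real.tanh x = x / (Real.sinh x * Real.cosh x) := by
  have hc : Real.cosh x ≠ 0 := (Real.cosh_pos x).ne'
  have hs : Real.sinh x ≠ 0 := Real.sinh_ne_zero.2 hx
  rw [Real.tanh_eq_sinh_div_cosh]
  have hid : Real.cosh x ^ 2 - Real.sinh x ^ 2 = 1 := Real.cosh_sq_sub_sinh_sq x
  field_simp
  nlinarith [Real.cosh_pos x]

private lemma g_pos_le {x : ℝ} (hx : 0 < x) :
    x / (Real.sinh x * Real.cosh x) ∈ Set.Ioc (0 : ℝ) 1 := by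
  have hs : 0 < Real.sinh x := Real.sinh_pos_iff.2 hx
  have hc : (1 : ℝ) ≤ Real.cosh x := Real.one_le_cosh x
  have hsc : 0 < Real.sinh x * Real.cosh x := by positivity
  constructor
  · positivity
  · rw [div_le_one hsc]
    have h1 : x < Real.sinh x := Real.self_lt_sinh_iff.2 hx
    nlinarith

/-- g(x) = x(1 − tanh²x)/tanh x, with g(0) = 1, is even, has values in (0,1],
    and is monotonically decreasing on [0, ∞). -/
theorem stmt_6 (g : ℝ → ℝ)
    (hg : ∀ x, g x = if x = 0 then 1 else x * (1 - Real.tanh x ^ 2) / Real.tanh x) :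
    (∀ x, g (-x) = g x) ∧
    (∀ x, g x ∈ Set.Ioc (0 : ℝ) 1) ∧
    AntitoneOn g (Set.Ici (0 : ℝ)) := by
  have heven : ∀ x, g (-x) = g x := by
    intro x
    rw [hg, hg]
    by_cases hx : x = 0
    · simp [hx]
    · rw [if_neg (neg_ne_zero.2 hx), if_neg hx, Real.tanh_neg]
      ring
  have hmem : ∀ x, g x ∈ Set.Ioc (0 : ℝ) 1 := by
    intro x
    rcases lt_trichotomy x 0 with hx | hx | hx
    · rw [← heven]
      have hx' : (0:ℝ) < -x := by linarith
      rw [hg, if_neg hx'.ne', g_eq hx'.ne']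
      exact g_pos_le hx'
    · simp [hg, hx]
    · rw [hg, if_neg hx.ne', g_eq hx.ne']
      exact g_pos_le hx
  refine ⟨heven, hmem, ?_⟩
  intro a ha b hb hab
  rcases eq_or_lt_of_le (mem_Ici.mp ha) with h0 | h0
  · have : g a = 1 := by rw [hg, if_pos h0.symm]
    rw [this]
    exact (hmem b).2
  · have hb0 : 0 < b := lt_of_lt_of_le h0 hab
    rw [hg a, if_neg h0.ne', g_eq h0.ne', hg b, if_neg hb0.ne', g_eq hb0.ne']
    have hsa : 0 < Real.sinh a := Real.sinh_pos_iff.2 h0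
    have hsb : 0 < Real.sinh b := Real.sinh_pos_iff.2 hb0
    have hca : 0 < Real.cosh a := Real.cosh_pos _
    have hcb : 0 < Real.cosh b := Real.cosh_pos _
    rw [div_le_div_iff₀ (by positivity) (by positivity)]
    have hkey := key_sinh (by linarith : (0:ℝ) < 2 * a) (by linarith : 2 * a ≤ 2 * b)
    rw [Real.sinh_two_mul, Real.sinh_two_mul] at hkey
    nlinarith
end

section
/- Componentwise forward error recurrence for one layer: let h_{ℓ−1} ∈ ℝ^{n_{ℓ−1}} be the exact previous output and ĥ_{ℓ−1} = h_{ℓ−1} ∘ (1+Δh_{ℓ−1}) with |Δh_{ℓ−1}| ≤ ε^h_{ℓ−1}. Suppose the computed layer output satisfies ĥ_ℓ = φ_ℓ((W_ℓ ∘ (1+ΔW_ℓ)) ĥ_{ℓ−1}) ∘ (1+Δφ_ℓ) with |ΔW_ℓ| ≤ ε^W_ℓ (rowwise) and |Δφ_ℓ| ≤ ε^φ_ℓ. Set v_ℓ = W_ℓ h_{ℓ−1}, assume (v_ℓ)_i ≠ 0 and φ_ℓ((v_ℓ)_i) ≠ 0 for all i, and let κ_{v_ℓ} = (|W_ℓ||h_{ℓ−1}|)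 ⊘ |v_ℓ| and κ_{φ_ℓ}(v_ℓ) be the componentwise activation condition number satisfying the perturbation identity φ_ℓ(v∘(1+Δv)) = φ_ℓ(v)∘(1+κ_{φ_ℓ}(v)∘(±Δv)). Then ĥ_ℓ = h_ℓ ∘ (1+Δh_ℓ) with |Δh_ℓ| ≤ κ_{φ_ℓ}(v_ℓ) ∘ κ_{v_ℓ} ∘ (ε^W_ℓ + ‖ε^h_{ℓ−1}‖_∞ (1 + ε^W_ℓ)) ∘ (1 + ε^φ_ℓ) + ε^φ_ℓ, where h_ℓ = φ_ℓ(v_ℓ). -/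
/-- Theorem 2.3 (componentwise forward error recurrence for one layer). -/
theorem stmt_11 (nprev n : ℕ)
    (W ΔW : Matrix (Fin n) (Fin nprev) ℝ)
    (hprev Δhprev εhprev : Fin nprev → ℝ)
    (εW Δφ εφ : Fin n → ℝ)
    (φ : ℝ → ℝ)
    (hεhprev_nonneg : ∀ j, 0 ≤ εhprev j) (hεW_nonneg : ∀ i, 0 ≤ εW i)
    (hεφ_nonneg : ∀ i, 0 ≤ εφ i)
    (hΔhprev : ∀ j, |Δhprev j| ≤ εhprev j)
    (hΔW : ∀ i j, |ΔW i j| ≤ εW i)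
    (hΔφ : ∀ i, |Δφ i| ≤ εφ i)
    (v : Fin n → ℝ) (hv : v = W.mulVec hprev)
    (hv0 : ∀ i, v i ≠ 0) (hφv0 : ∀ i, φ (v i) ≠ 0)
    (κv : Fin n → ℝ)
    (hκv : ∀ i, κv i = (Matrix.mulVec (fun i j => |W i j|) (fun j => |hprev j|)) i / |v i|)
    (κφ : Fin n → ℝ) (hκφ_nonneg : ∀ i, 0 ≤ κφ i)
    -- the activation perturbation identity φ(v∘(1+Δv)) = φ(v)∘(1+κφ(v)∘(±Δv))
    (hκφ : ∀ Δv : Fin n → ℝ, ∃ s : Fin n → ℝ, (∀ i, s i = 1 ∨ s i = -1) ∧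
      ∀ i, φ (v i * (1 + Δv i)) = φ (v i) * (1 + κφ i * (s i * Δv i)))
    (hhatprev : Fin nprev → ℝ) (hhhatprev : ∀ j, hhatprev j = hprev j * (1 + Δhprev j))
    (hhat : Fin n → ℝ)
    (hhhat : ∀ i, hhat i = φ ((Matrix.mulVec (fun i j => W i j * (1 + ΔW i j)) hhatprev) i)
        * (1 + Δφ i))
    (h : Fin n → ℝ) (hh : ∀ i, h i = φ (v i)) :
    ∃ Δh : Fin n → ℝ,
      (∀ i, hhat i = h i * (1 + Δh i)) ∧
      (∀ i, |Δh i| ≤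
        κφ i * κv i * (εW i + (⨆ j, εhprev j) * (1 + εW i)) * (1 + εφ i) + εφ i) := by
  classical
  set p : Fin n → ℝ := Matrix.mulVec (fun i j => W i j * (1 + ΔW i j)) hhatprev with hp
  set Δv : Fin n → ℝ := fun i => (p i - v i) / v i with hΔvdef
  obtain ⟨s, hs, hsid⟩ := hκφ Δv
  refine ⟨fun i => κφ i * (s i * Δv i) * (1 + Δφ i) + Δφ i, ?_, ?_⟩
  · intro i
    have hvi := hv0 i
    have h1 : v i * (1 + Δv i) = p i := by
      simp only [hΔvdef]
      field_simp
      ring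
    rw [hhhat i, hh i, ← h1, hsid i]; ring
  · intro i
    set E := ⨆ j, εhprev j with hE
    have hE0 : 0 ≤ E := Real.iSup_nonneg hεhprev_nonneg
    have hEj : ∀ j, εhprev j ≤ E :=
      fun j => le_ciSup (Set.Finite.bddAbove (Set.finite_range _)) j
    set c : ℝ := εW i + E * (1 + εW i) with hc
    have hc0 : 0 ≤ c := by
      have := hεW_nonneg i
      nlinarith
    set A : ℝ := (Matrix.mulVec (fun i j => |W i j|) (fun j => |hprev j|)) i with hA
    have hA0 : 0 ≤ A := by
      rw [hA]
      simp only [Matrix.mulVec, dotProduct]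
      exact Finset.sum_nonneg fun j _ => mul_nonneg (abs_nonneg _) (abs_nonneg _)
    -- key bound on |p i - v i|
    have hpv : p i - v i = ∑ j, W i j * hprev j * (ΔW i j + Δhprev j + ΔW i j * Δhprev j) := by
      rw [hp, hv]
      simp only [Matrix.mulVec, dotProduct, ← Finset.sum_sub_distrib]
      refine Finset.sum_congr rfl fun j _ => ?_
      rw [hhhatprev j]; ring
    have hterm : ∀ j, |W i j * hprev j * (ΔW i j + Δhprev j + ΔW i j * Δhprev j)|
        ≤ |W i j| * |hprev j| * c := by
      intro j
      rw [abs_mul, abs_mul]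
      refine mul_le_mul_of_nonneg_left ?_ (mul_nonneg (abs_nonneg _) (abs_nonneg _))
      have h1 := hΔW i j
      have h2 := hΔhprev j
      have h3 := hEj j
      have h4 : |ΔW i j * Δhprev j| ≤ εW i * E := by
        rw [abs_mul]
        exact mul_le_mul h1 (h2.trans h3) (abs_nonneg _) (hεW_nonneg i)
      calc |ΔW i j + Δhprev j + ΔW i j * Δhprev j|
          ≤ |ΔW i j| + |Δhprev j| + |ΔW i j * Δhprev j| :=
            (abs_add_le _ _).trans (add_le_add_left (abs_add_le _ _) _)
        _ ≤ εW i + E + εW i * E := add_le_add (add_le_add h1 (h2.trans h3)) h4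
        _ = c := by rw [hc]; ring
    have hpvb : |p i - v i| ≤ A * c := by
      rw [hpv, hA]
      calc |∑ j, W i j * hprev j * (ΔW i j + Δhprev j + ΔW i j * Δhprev j)|
          ≤ ∑ j, |W i j * hprev j * (ΔW i j + Δhprev j + ΔW i j * Δhprev j)| :=
            Finset.abs_sum_le_sum_abs _ _
        _ ≤ ∑ j, |W i j| * |hprev j| * c := Finset.sum_le_sum fun j _ => hterm j
        _ = (Matrix.mulVec (fun i j => |W i j|) (fun j => |hprev j|)) i * c := by
            simp only [Matrix.mulVec, dotProduct, Finset.sum_mul]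
    have hvpos : 0 < |v i| := abs_pos.mpr (hv0 i)
    have hΔvb : |Δv i| ≤ κv i * c := by
      rw [hΔvdef]
      simp only
      rw [abs_div, hκv i, ← hA, div_mul_eq_mul_div]
      exact div_le_div_of_nonneg_right hpvb hvpos.le
    have hκv0 : 0 ≤ κv i := by
      rw [hκv i, ← hA]
      exact div_nonneg hA0 (abs_nonneg _)
    have hsabs : |s i| = 1 := by rcases hs i with h' | h' <;> simp [h']
    have h1φ : |1 + Δφ i| ≤ 1 + εφ i := by
      calc |1 + Δφ i| ≤ |(1:ℝ)| + |Δφ i| := abs_add_le _ _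
        _ ≤ 1 + εφ i := by rw [abs_one]; exact add_le_add_right (hΔφ i) _
    calc |κφ i * (s i * Δv i) * (1 + Δφ i) + Δφ i|
        ≤ |κφ i * (s i * Δv i) * (1 + Δφ i)| + |Δφ i| := abs_add_le _ _
      _ ≤ κφ i * (κv i * c) * (1 + εφ i) + εφ i := by
          refine add_le_add ?_ (hΔφ i)
          rw [abs_mul, abs_mul, abs_mul, hsabs, one_mul, abs_of_nonneg (hκφ_nonneg i)]
          refine mul_le_mul (mul_le_mul_of_nonneg_left hΔvb (hκφ_nonneg i)) h1φ
            (abs_nonneg _) (mul_nonneg (hκφ_nonneg i) (mul_nonneg hκv0 hc0))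
      _ = κφ i * κv i * c * (1 + εφ i) + εφ i := by ring
end
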